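/- Let f : ℤ² → {contact elements} be a nondegenerate discrete channel surface with circular direction '+' and let p ∈ V with ⟨p,p⟩ < 0. Then for all m, m', n ∈ ℤ the four point spheres of f(m,n), f(m',n), f(m',n+1) and f(m,n+1) lie in a common subspace of V of dimension at most 3. (Any two pairs of corresponding vertices on two adjacent circular curvature lines are concircular; in particular, any two discrete curvature lines in the non-circular direction of a discrete channel surface form a Ribaucour pair, and every '+'-coordinate ribbon is multi-circular.) -/

import Mathlib

noncomputable section

/-- The Lie sphere geometric model: `ℝ^{4,2}`. -/
abbrev V6 : Type := Fin 6 → ℝ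

/-- The symmetric bilinear form of signature `(4,2)` on `V6`. -/
def B (x y : V6) : ℝ :=
  x 0 * y 0 + x 1 * y 1 + x 2 * y 2 + x 3 * y 3 - x 4 * y 4 - x 5 * y 5

/-- An oriented sphere: a 1-dimensional isotropic subspace. -/
def IsSphere (S : Submodule ℝ V6) : Prop :=
  Module.finrank ℝ S = 1 ∧ ∀ x ∈ S, B x x = 0

/-- A contact element: a 2-dimensional totally isotropic subspace. -/
def IsContact (W : Submodule ℝ V6) : Prop :=
  Module.finrank ℝ W = 2 ∧ ∀ x ∈ W, ∀ y ∈ W, B x y = 0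

/-- A `(2,1)`-plane: 3-dim subspace on which the form is nondegenerate of signature `(2,1)`. -/
def IsSig21 (D : Submodule ℝ V6) : Prop :=
  ∃ u v w : V6, D = Submodule.span ℝ {u, v, w} ∧
    B u u = 1 ∧ B v v = 1 ∧ B w w = -1 ∧ B u v = 0 ∧ B u w = 0 ∧ B v w = 0

/-- A Dupin cyclide: a pair of `(2,1)`-planes, the second the orthogonal complement of the first. -/
def IsDupin (D E : Submodule ℝ V6) : Prop :=
  IsSig21 D ∧ IsSig21 E ∧ ∀ x : V6, x ∈ E ↔ ∀ y ∈ D, B x y = 0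

lemma B_symm (x y : V6) : B x y = B y x := by simp only [B]; ring

lemma exists_span (S : Submodule ℝ V6) (h : Module.finrank ℝ S = 1) :
    ∃ v : V6, v ≠ 0 ∧ S = Submodule.span ℝ {v} := by
  have hS : S ≠ ⊥ := by
    intro hb
    rw [hb, finrank_bot] at h
    exact one_ne_zero h.symm
  obtain ⟨v, hvS, hv0⟩ := (Submodule.ne_bot_iff S).mp hS
  refine ⟨v, hv0, ?_⟩
  have hle : Submodule.span ℝ ({v} : Set V6) ≤ S := by
    simpa [Submodule.span_singleton_le_iff_mem] using hvS
  exact (Submodule.eq_of_le_of_finrank_le hle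
    (by rw [h, finrank_span_singleton hv0])).symm

lemma finrank_sup_le (A C : Submodule ℝ V6) :
    Module.finrank ℝ (A ⊔ C : Submodule ℝ V6) ≤ Module.finrank ℝ A + Module.finrank ℝ C := by
  have := Submodule.finrank_sup_add_finrank_inf_eq A C
  omega

lemma finrank_span_single_le (a : V6) :
    Module.finrank ℝ (Submodule.span ℝ ({a} : Set V6)) ≤ 1 := by
  by_cases h : a = 0
  · rw [h, Submodule.span_zero_singleton, finrank_bot]
    omega
  · rw [finrank_span_singleton h]

lemma sup_of_ne (F A C : Submodule ℝ V6) (hF : Module.finrank ℝ F = 2)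
    (hA : Module.finrank ℝ A = 1) (hC : Module.finrank ℝ C = 1) (hne : A ≠ C)
    (hAF : A ≤ F) (hCF : C ≤ F) : A ⊔ C = F := by
  have hinf : A ⊓ C = ⊥ := by
    by_contra hib
    have h1 : Module.finrank ℝ (A ⊓ C : Submodule ℝ V6) ≠ 0 :=
      fun h0 => hib (Submodule.finrank_eq_zero.mp h0)
    have hA' : A ⊓ C = A := Submodule.eq_of_le_of_finrank_le inf_le_left (by omega)
    have hC' : A ⊓ C = C := Submodule.eq_of_le_of_finrank_le inf_le_right (by omega)
    exact hne (hA'.symm.trans hC')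
  have h2 : Module.finrank ℝ (A ⊔ C : Submodule ℝ V6) = 2 := by
    have := Submodule.finrank_sup_add_finrank_inf_eq A C
    rw [hinf] at this
    simp only [finrank_bot] at this
    omega
  exact Submodule.eq_of_le_of_finrank_le (sup_le hAF hCF) (by omega)

lemma Bexp3 (a b c : ℝ) (u v w t : V6) :
    B (a • u + (b • v + c • w)) t = a * B u t + b * B v t + c * B w t := by
  simp only [B, Pi.add_apply, Pi.smul_apply, smul_eq_mul]; ring

lemma dupin_inf_bot {Dn En : Submodule ℝ V6} (h : IsDupin Dn En) : Dn ⊓ En = ⊥ := by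
  obtain ⟨⟨u, v, w, hspan, huu, hvv, hww, huv, huw, hvw⟩, -, hE⟩ := h
  rw [Submodule.eq_bot_iff]
  rintro x ⟨hxD, hxE⟩
  have hx : ∀ y ∈ Dn, B x y = 0 := (hE x).mp hxE
  have hu : u ∈ Dn := hspan ▸ Submodule.subset_span (by simp)
  have hv : v ∈ Dn := hspan ▸ Submodule.subset_span (by simp)
  have hw : w ∈ Dn := hspan ▸ Submodule.subset_span (by simp)
  rw [hspan] at hxD
  obtain ⟨a, z, hz, rfl⟩ := Submodule.mem_span_insert.mp hxD
  obtain ⟨b, z', hz', rfl⟩ := Submodule.mem_span_insert.mp hz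
  obtain ⟨c, rfl⟩ := Submodule.mem_span_singleton.mp hz'
  have e1 := hx u hu
  have e2 := hx v hv
  have e3 := hx w hw
  rw [Bexp3] at e1 e2 e3
  have ha : a = 0 := by rw [B_symm v u, B_symm w u, huu, huv, huw] at e1; linarith
  have hb : b = 0 := by rw [B_symm w v, huv, hvv, hvw] at e2; linarith
  have hc : c = 0 := by rw [huw, hvw, hww] at e3; linarith
  simp [ha, hb, hc]

lemma curv_step (Dn En : Submodule ℝ V6) (hDE : Dn ⊓ En = ⊥)
    (F A A' C : Submodule ℝ V6) (hFr : Module.finrank ℝ F = 2)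
    (hA'r : Module.finrank ℝ A' = 1) (hCr : Module.finrank ℝ C = 1)
    (hA'C : A' ≠ C) (hA'F : A' ≤ F) (hCF : C ≤ F)
    (hAF : A ≤ F) (hAD : A ≤ Dn) (hA'D : A' ≤ Dn) (hCE : C ≤ En)
    (hAr : Module.finrank ℝ A = 1) : A = A' := by
  have hsup := sup_of_ne F A' C hFr hA'r hCr hA'C hA'F hCF
  have hle : A ≤ A' := by
    intro x hx
    have hxF : x ∈ A' ⊔ C := hsup ▸ hAF hx
    obtain ⟨u, hu, w, hw, rfl⟩ := Submodule.mem_sup.mp hxF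
    have hwD : w ∈ Dn := by
      have h1 : u + w ∈ Dn := hAD hx
      have h2 : u ∈ Dn := hA'D hu
      simpa using Submodule.sub_mem Dn h1 h2
    have hw0 : w = 0 := by
      have : w ∈ Dn ⊓ En := ⟨hwD, hCE hw⟩
      rw [hDE] at this
      simpa using this
    simpa [hw0] using hu
  exact Submodule.eq_of_le_of_finrank_le hle (by omega)

lemma int_const {α : Type*} (g : ℤ → α) (h : ∀ k, g k = g (k + 1)) :
    ∀ a b : ℤ, g a = g b := by
  have h0 : ∀ b : ℤ, g b = g 0 := by
    intro b
    induction b using Int.induction_on with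
    | zero => rfl
    | succ k ih => rw [← h k]; exact ih
    | pred k ih =>
      have hk : (-(k : ℤ) - 1) + 1 = -k := by ring
      rw [h (-(k : ℤ) - 1), hk]
      exact ih
  intro a b
  rw [h0 a, h0 b]

set_option maxHeartbeats 1000000 in
lemma not_both_ortho (p x y : V6) (hp : B p p < 0) (hx : B x x = 0) (hy : B y y = 0)
    (hxy : B x y = 0) (hx0 : x ≠ 0) (hy0 : y ≠ 0)
    (hss : Submodule.span ℝ ({x} : Set V6) ≠ Submodule.span ℝ ({y} : Set V6)) :
    ¬ (B x p = 0 ∧ B y p = 0) := by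
  rintro ⟨hxp, hyp⟩
  set w : Fin 3 → (Fin 2 → ℝ) := ![![x 4, x 5], ![y 4, y 5], ![p 4, p 5]] with hw
  have hnl : ¬ LinearIndependent ℝ w := by
    intro hli
    have h1 := hli.fintype_card_le_finrank
    rw [Module.finrank_fin_fun] at h1
    simp at h1
  obtain ⟨g, hg, i, hgi⟩ := Fintype.not_linearIndependent_iff.mp hnl
  set a := g 0 with ha'
  set b := g 1 with hb'
  set c := g 2 with hc'
  have h4 : a * x 4 + b * y 4 + c * p 4 = 0 := by
    have := congrFun hg 0
    simpa [Fin.sum_univ_three, hw, mul_comm] using this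
  have h5 : a * x 5 + b * y 5 + c * p 5 = 0 := by
    have := congrFun hg 1
    simpa [Fin.sum_univ_three, hw, mul_comm] using this
  have key : (a * x 0 + b * y 0 + c * p 0) ^ 2 + (a * x 1 + b * y 1 + c * p 1) ^ 2
      + (a * x 2 + b * y 2 + c * p 2) ^ 2 + (a * x 3 + b * y 3 + c * p 3) ^ 2
      = c ^ 2 * B p p := by
    simp only [B] at hx hy hxy hxp hyp ⊢
    linear_combination a ^ 2 * hx + b ^ 2 * hy + 2 * a * b * hxy + 2 * a * c * hxp
      + 2 * b * c * hyp + (a * x 4 + b * y 4 + c * p 4) * h4 + (a * x 5 + b * y 5 + c * p 5) * h5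
  have hc0 : c = 0 := by
    have h1 : 0 ≤ c ^ 2 * B p p := by
      rw [← key]; positivity
    have h2 : c ^ 2 * B p p ≤ 0 := by nlinarith [sq_nonneg c]
    have h3 : c ^ 2 * B p p = 0 := le_antisymm h2 h1
    rcases mul_eq_zero.mp h3 with h | h
    · exact (pow_eq_zero_iff two_ne_zero).mp h
    · exfalso; linarith
  rw [hc0] at key h4 h5
  have key2 : (a * x 0 + b * y 0) ^ 2 + (a * x 1 + b * y 1) ^ 2
      + (a * x 2 + b * y 2) ^ 2 + (a * x 3 + b * y 3) ^ 2 = 0 := by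
    linear_combination key
  have e0 : a * x 0 + b * y 0 = 0 := by
    nlinarith [sq_nonneg (a * x 0 + b * y 0), sq_nonneg (a * x 1 + b * y 1),
      sq_nonneg (a * x 2 + b * y 2), sq_nonneg (a * x 3 + b * y 3)]
  have e1 : a * x 1 + b * y 1 = 0 := by
    nlinarith [sq_nonneg (a * x 0 + b * y 0), sq_nonneg (a * x 1 + b * y 1),
      sq_nonneg (a * x 2 + b * y 2), sq_nonneg (a * x 3 + b * y 3)]
  have e2 : a * x 2 + b * y 2 = 0 := by
    nlinarith [sq_nonneg (a * x 0 + b * y 0), sq_nonneg (a * x 1 + b * y 1),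
      sq_nonneg (a * x 2 + b * y 2), sq_nonneg (a * x 3 + b * y 3)]
  have e3 : a * x 3 + b * y 3 = 0 := by
    nlinarith [sq_nonneg (a * x 0 + b * y 0), sq_nonneg (a * x 1 + b * y 1),
      sq_nonneg (a * x 2 + b * y 2), sq_nonneg (a * x 3 + b * y 3)]
  have h4' : a * x 4 + b * y 4 = 0 := by linarith
  have h5' : a * x 5 + b * y 5 = 0 := by linarith
  have hdep : a • x + b • y = 0 := by
    funext j
    fin_cases j <;> simp only [Pi.add_apply, Pi.smul_apply, smul_eq_mul, Pi.zero_apply]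
    · exact e0
    · exact e1
    · exact e2
    · exact e3
    · exact h4'
    · exact h5'
  have hab : a ≠ 0 ∨ b ≠ 0 := by
    fin_cases i
    · exact Or.inl hgi
    · exact Or.inr hgi
    · exact absurd hc0 hgi
  apply hss
  rcases hab with hA | hB
  · have hb0 : b ≠ 0 := by
      intro hb0
      apply hx0
      have : a • x = 0 := by rw [hb0] at hdep; simpa using hdep
      simpa [hA] using this
    have h1 : a • x = -(b • y) := eq_neg_of_add_eq_zero_left hdep
    have hxe : x = (-(a⁻¹ * b)) • y := by
      calc x = a⁻¹ • (a • x) := by rw [smul_smul, inv_mul_cancel₀ hA, one_smul]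
      _ = a⁻¹ • (-(b • y)) := by rw [h1]
      _ = (-(a⁻¹ * b)) • y := by rw [smul_neg, smul_smul, ← neg_smul]
    rw [hxe]
    exact Submodule.span_singleton_smul_eq
      (isUnit_iff_ne_zero.mpr (by simp [hA, hb0] : (-(a⁻¹ * b)) ≠ 0)) y
  · have ha0 : a ≠ 0 := by
      intro ha0
      apply hy0
      have : b • y = 0 := by rw [ha0] at hdep; simpa using hdep
      simpa [hB] using this
    have h1 : b • y = -(a • x) := by
      apply eq_neg_of_add_eq_zero_left
      rw [add_comm]
      exact hdep
    have hye : y = (-(b⁻¹ * a)) • x := by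
      calc y = b⁻¹ • (b • y) := by rw [smul_smul, inv_mul_cancel₀ hB, one_smul]
      _ = b⁻¹ • (-(a • x)) := by rw [h1]
      _ = (-(b⁻¹ * a)) • x := by rw [smul_neg, smul_smul, ← neg_smul]
    rw [hye]
    exact (Submodule.span_singleton_smul_eq
      (isUnit_iff_ne_zero.mpr (by simp [hB, ha0] : (-(b⁻¹ * a)) ≠ 0)) x).symm

/-- Horizontal curvature sphere on the edge from `(m,n)` to `(m+1,n)`. -/
def sPlus (f : ℤ × ℤ → Submodule ℝ V6) (m n : ℤ) : Submodule ℝ V6 :=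
  f (m, n) ⊓ f (m + 1, n)

/-- Vertical curvature sphere on the edge from `(m,n)` to `(m,n+1)`. -/
def sMinus (f : ℤ × ℤ → Submodule ℝ V6) (m n : ℤ) : Submodule ℝ V6 :=
  f (m, n) ⊓ f (m, n + 1)

/-- A discrete Legendre map. -/
def IsLegendre (f : ℤ × ℤ → Submodule ℝ V6) : Prop :=
  (∀ p : ℤ × ℤ, IsContact (f p)) ∧
  (∀ m n : ℤ, Module.finrank ℝ (sPlus f m n) = 1) ∧
  (∀ m n : ℤ, Module.finrank ℝ (sMinus f m n) = 1)

/-- A face-cyclide congruence for `f`. -/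
def IsFaceCyclideCongruence (f D E : ℤ × ℤ → Submodule ℝ V6) : Prop :=
  ∀ m n : ℤ,
    IsDupin (D (m, n)) (E (m, n)) ∧
    sPlus f m n ≤ D (m, n) ∧ sPlus f m (n + 1) ≤ D (m, n) ∧
    sMinus f m n ≤ E (m, n) ∧ sMinus f (m + 1) n ≤ E (m, n)

/-- A discrete channel surface with circular direction `+`. -/
def IsChannelPlus (f : ℤ × ℤ → Submodule ℝ V6) : Prop :=
  IsLegendre f ∧
  ∃ D E : ℤ × ℤ → Submodule ℝ V6,
    IsFaceCyclideCongruence f D E ∧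
    ∀ m m' n : ℤ, D (m, n) = D (m', n) ∧ E (m, n) = E (m', n)

/-- The orthogonal complement of a point sphere complex `p`. -/
def pPerp (p : V6) : Submodule ℝ V6 where
  carrier := {x | B x p = 0}
  add_mem' := by
    intro a b ha hb
    simp only [Set.mem_setOf_eq, B, Pi.add_apply] at *
    linear_combination ha + hb
  zero_mem' := by simp [B]
  smul_mem' := by
    intro c x hx
    simp only [Set.mem_setOf_eq, B, Pi.smul_apply, smul_eq_mul] at *
    linear_combination c * hx


lemma mem_pPerp {p x : V6} : x ∈ pPerp p ↔ B x p = 0 := Iff.rfl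

lemma ps_le (p d v : V6) (F : Submodule ℝ V6)
    (hF : F ≤ Submodule.span ℝ ({d} : Set V6) ⊔ Submodule.span ℝ ({v} : Set V6))
    (hne : ¬ (B d p = 0 ∧ B v p = 0)) :
    F ⊓ pPerp p ≤ Submodule.span ℝ {B v p • d - B d p • v} := by
  rintro z ⟨hzF, hzp⟩
  obtain ⟨zd, hzd, zv, hzv, rfl⟩ := Submodule.mem_sup.mp (hF hzF)
  obtain ⟨a, rfl⟩ := Submodule.mem_span_singleton.mp hzd
  obtain ⟨b, rfl⟩ := Submodule.mem_span_singleton.mp hzv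
  have hz : a * B d p + b * B v p = 0 := by
    have h0 : B (a • d + b • v) p = 0 := mem_pPerp.mp hzp
    simp only [B, Pi.add_apply, Pi.smul_apply, smul_eq_mul] at h0 ⊢
    linear_combination h0
  rw [Submodule.mem_span_singleton]
  by_cases hβ : B v p = 0
  · have hα : B d p ≠ 0 := fun h => hne ⟨h, hβ⟩
    have ha : a = 0 := by
      have h1 : a * B d p = 0 := by rw [hβ] at hz; linarith
      rcases mul_eq_zero.mp h1 with h | h
      · exact h
      · exact absurd h hα
    refine ⟨-b / B d p, ?_⟩
    rw [hβ, ha]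
    match_scalars
    · ring
    · field_simp
  · refine ⟨a / B v p, ?_⟩
    match_scalars
    · field_simp
    · field_simp
      linear_combination -hz

lemma span_le_of_mem {x : V6} {W : Submodule ℝ V6} (h : x ∈ W) :
    Submodule.span ℝ ({x} : Set V6) ≤ W :=
  Submodule.span_le.mpr (Set.singleton_subset_iff.mpr h)

lemma finrank_sup3_le (a b c : V6) :
    Module.finrank ℝ (Submodule.span ℝ ({a} : Set V6) ⊔ Submodule.span ℝ ({b} : Set V6)
      ⊔ Submodule.span ℝ ({c} : Set V6) : Submodule ℝ V6) ≤ 3 := by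
  have h1 := finrank_sup_le (Submodule.span ℝ ({a} : Set V6) ⊔ Submodule.span ℝ ({b} : Set V6))
    (Submodule.span ℝ ({c} : Set V6))
  have h2 := finrank_sup_le (Submodule.span ℝ ({a} : Set V6)) (Submodule.span ℝ ({b} : Set V6))
  have h3 := finrank_span_single_le a
  have h4 := finrank_span_single_le b
  have h5 := finrank_span_single_le c
  omega


/-- `f` is nondegenerate: every contact element of `f` is spanned by a horizontal and a
vertical curvature sphere. -/
def Nondeg (f : ℤ × ℤ → Submodule ℝ V6) : Prop :=
  ∀ m n : ℤ, sPlus f m n ≠ sMinus f m n ∧ sPlus f m (n + 1) ≠ sMinus f m n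

/-- For a nondegenerate discrete channel surface with circular direction `+`
and a point sphere complex `p`, any two pairs of corresponding vertices on two adjacent
circular curvature lines are concircular: the four point spheres of `f(m,n)`, `f(m',n)`,
`f(m',n+1)`, `f(m,n+1)` lie in a common subspace of dimension at most 3. -/
theorem adjacent_circular_lines_concircular
    (f : ℤ × ℤ → Submodule ℝ V6) (hf : IsChannelPlus f) (hnd : Nondeg f)
    (p : V6) (hp : B p p < 0) :
    ∀ m m' n : ℤ, ∃ W : Submodule ℝ V6, Module.finrank ℝ W ≤ 3 ∧
      f (m, n) ⊓ pPerp p ≤ W ∧ f (m', n) ⊓ pPerp p ≤ W ∧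
      f (m', n + 1) ⊓ pPerp p ≤ W ∧ f (m, n + 1) ⊓ pPerp p ≤ W := by
  intro m m' n
  obtain ⟨⟨hC, hSp, hSm⟩, D, E, hcon, hind⟩ := hf
  have hDE : D (0, n) ⊓ E (0, n) = ⊥ := dupin_inf_bot (hcon 0 n).1
  have hsp1 : ∀ k : ℤ, sPlus f k n ≤ D (0, n) :=
    fun k => (hcon k n).2.1.trans (le_of_eq (hind k 0 n).1)
  have hsp2 : ∀ k : ℤ, sPlus f k (n + 1) ≤ D (0, n) :=
    fun k => (hcon k n).2.2.1.trans (le_of_eq (hind k 0 n).1)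
  have hsm1 : ∀ k : ℤ, sMinus f k n ≤ E (0, n) :=
    fun k => (hcon k n).2.2.2.1.trans (le_of_eq (hind k 0 n).2)
  have hstep1 : ∀ k : ℤ, sPlus f k n = sPlus f (k + 1) n := fun k =>
    curv_step (D (0, n)) (E (0, n)) hDE (f (k + 1, n))
      (sPlus f k n) (sPlus f (k + 1) n) (sMinus f (k + 1) n)
      (hC (k + 1, n)).1 (hSp (k + 1) n) (hSm (k + 1) n) (hnd (k + 1) n).1
      inf_le_left inf_le_left inf_le_right (hsp1 k) (hsp1 (k + 1)) (hsm1 (k + 1)) (hSp k n)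
  have hstep2 : ∀ k : ℤ, sPlus f k (n + 1) = sPlus f (k + 1) (n + 1) := fun k =>
    curv_step (D (0, n)) (E (0, n)) hDE (f (k + 1, n + 1))
      (sPlus f k (n + 1)) (sPlus f (k + 1) (n + 1)) (sMinus f (k + 1) n)
      (hC (k + 1, n + 1)).1 (hSp (k + 1) (n + 1)) (hSm (k + 1) n) (hnd (k + 1) n).2
      inf_le_left inf_le_right inf_le_right (hsp2 k) (hsp2 (k + 1)) (hsm1 (k + 1)) (hSp k (n + 1))
  have hrow1 := int_const (fun k => sPlus f k n) hstep1
  have hrow2 := int_const (fun k => sPlus f k (n + 1)) hstep2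
  obtain ⟨d1, hd10, hd1⟩ := exists_span _ (hSp m n)
  obtain ⟨d2, hd20, hd2⟩ := exists_span _ (hSp m (n + 1))
  obtain ⟨v, hv0, hv⟩ := exists_span _ (hSm m n)
  obtain ⟨v', hv'0, hv'⟩ := exists_span _ (hSm m' n)
  have hd1' : sPlus f m' n = Submodule.span ℝ {d1} := (hrow1 m' m).trans hd1
  have hd2' : sPlus f m' (n + 1) = Submodule.span ℝ {d2} := (hrow2 m' m).trans hd2
  have hF1 : Submodule.span ℝ ({d1} : Set V6) ⊔ Submodule.span ℝ ({v} : Set V6) = f (m, n) := by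
    rw [← hd1, ← hv]
    exact sup_of_ne _ _ _ (hC (m, n)).1 (hSp m n) (hSm m n) (hnd m n).1 inf_le_left inf_le_left
  have hF2 : Submodule.span ℝ ({d2} : Set V6) ⊔ Submodule.span ℝ ({v} : Set V6)
      = f (m, n + 1) := by
    rw [← hd2, ← hv]
    exact sup_of_ne _ _ _ (hC (m, n + 1)).1 (hSp m (n + 1)) (hSm m n) (hnd m n).2
      inf_le_left inf_le_right
  have hF3 : Submodule.span ℝ ({d1} : Set V6) ⊔ Submodule.span ℝ ({v'} : Set V6)
      = f (m', n) := by
    rw [← hd1', ← hv']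
    exact sup_of_ne _ _ _ (hC (m', n)).1 (hSp m' n) (hSm m' n) (hnd m' n).1
      inf_le_left inf_le_left
  have hF4 : Submodule.span ℝ ({d2} : Set V6) ⊔ Submodule.span ℝ ({v'} : Set V6)
      = f (m', n + 1) := by
    rw [← hd2', ← hv']
    exact sup_of_ne _ _ _ (hC (m', n + 1)).1 (hSp m' (n + 1)) (hSm m' n) (hnd m' n).2
      inf_le_left inf_le_right
  have hd1f1 : d1 ∈ f (m, n) := hF1 ▸ Submodule.mem_sup_left (Submodule.mem_span_singleton_self d1)
  have hvf1 : v ∈ f (m, n) := hF1 ▸ Submodule.mem_sup_right (Submodule.mem_span_singleton_self v)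
  have hd2f2 : d2 ∈ f (m, n + 1) :=
    hF2 ▸ Submodule.mem_sup_left (Submodule.mem_span_singleton_self d2)
  have hvf2 : v ∈ f (m, n + 1) :=
    hF2 ▸ Submodule.mem_sup_right (Submodule.mem_span_singleton_self v)
  have hd1f3 : d1 ∈ f (m', n) :=
    hF3 ▸ Submodule.mem_sup_left (Submodule.mem_span_singleton_self d1)
  have hv'f3 : v' ∈ f (m', n) :=
    hF3 ▸ Submodule.mem_sup_right (Submodule.mem_span_singleton_self v')
  have hd2f4 : d2 ∈ f (m', n + 1) :=
    hF4 ▸ Submodule.mem_sup_left (Submodule.mem_span_singleton_self d2)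
  have hv'f4 : v' ∈ f (m', n + 1) :=
    hF4 ▸ Submodule.mem_sup_right (Submodule.mem_span_singleton_self v')
  have bd1d1 : B d1 d1 = 0 := (hC (m, n)).2 d1 hd1f1 d1 hd1f1
  have bvv : B v v = 0 := (hC (m, n)).2 v hvf1 v hvf1
  have bd1v : B d1 v = 0 := (hC (m, n)).2 d1 hd1f1 v hvf1
  have bd2d2 : B d2 d2 = 0 := (hC (m, n + 1)).2 d2 hd2f2 d2 hd2f2
  have bd2v : B d2 v = 0 := (hC (m, n + 1)).2 d2 hd2f2 v hvf2
  have bv'v' : B v' v' = 0 := (hC (m', n)).2 v' hv'f3 v' hv'f3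
  have bd1v' : B d1 v' = 0 := (hC (m', n)).2 d1 hd1f3 v' hv'f3
  have bd2v' : B d2 v' = 0 := (hC (m', n + 1)).2 d2 hd2f4 v' hv'f4
  have hne1 : ¬ (B d1 p = 0 ∧ B v p = 0) :=
    not_both_ortho p d1 v hp bd1d1 bvv bd1v hd10 hv0 (by rw [← hd1, ← hv]; exact (hnd m n).1)
  have hne2 : ¬ (B d2 p = 0 ∧ B v p = 0) :=
    not_both_ortho p d2 v hp bd2d2 bvv bd2v hd20 hv0 (by rw [← hd2, ← hv]; exact (hnd m n).2)
  have hne3 : ¬ (B d1 p = 0 ∧ B v' p = 0) :=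
    not_both_ortho p d1 v' hp bd1d1 bv'v' bd1v' hd10 hv'0
      (by rw [← hd1', ← hv']; exact (hnd m' n).1)
  have hne4 : ¬ (B d2 p = 0 ∧ B v' p = 0) :=
    not_both_ortho p d2 v' hp bd2d2 bv'v' bd2v' hd20 hv'0
      (by rw [← hd2', ← hv']; exact (hnd m' n).2)
  have hps1 := ps_le p d1 v (f (m, n)) (le_of_eq hF1.symm) hne1
  have hps2 := ps_le p d2 v (f (m, n + 1)) (le_of_eq hF2.symm) hne2
  have hps3 := ps_le p d1 v' (f (m', n)) (le_of_eq hF3.symm) hne3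
  have hps4 := ps_le p d2 v' (f (m', n + 1)) (le_of_eq hF4.symm) hne4
  by_cases hα : B d1 p = 0
  · refine ⟨Submodule.span ℝ ({d1} : Set V6)
      ⊔ Submodule.span ℝ {B v p • d2 - B d2 p • v}
      ⊔ Submodule.span ℝ {B v' p • d2 - B d2 p • v'}, finrank_sup3_le _ _ _, ?_, ?_, ?_, ?_⟩
    · refine hps1.trans (span_le_of_mem ?_)
      rw [hα]
      exact Submodule.mem_sup_left (Submodule.mem_sup_left
        (Submodule.mem_span_singleton.mpr ⟨B v p, by module⟩))
    · refine hps3.trans (span_le_of_mem ?_)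
      rw [hα]
      exact Submodule.mem_sup_left (Submodule.mem_sup_left
        (Submodule.mem_span_singleton.mpr ⟨B v' p, by module⟩))
    · exact hps4.trans le_sup_right
    · exact hps2.trans ((le_sup_right).trans le_sup_left)
  · by_cases hβ : B v p = 0
    · refine ⟨Submodule.span ℝ ({v} : Set V6)
        ⊔ Submodule.span ℝ {B v' p • d1 - B d1 p • v'}
        ⊔ Submodule.span ℝ {B v' p • d2 - B d2 p • v'}, finrank_sup3_le _ _ _, ?_, ?_, ?_, ?_⟩
      · refine hps1.trans (span_le_of_mem ?_)
        rw [hβ]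
        exact Submodule.mem_sup_left (Submodule.mem_sup_left
          (Submodule.mem_span_singleton.mpr ⟨-(B d1 p), by module⟩))
      · exact hps3.trans ((le_sup_right).trans le_sup_left)
      · exact hps4.trans le_sup_right
      · refine hps2.trans (span_le_of_mem ?_)
        rw [hβ]
        exact Submodule.mem_sup_left (Submodule.mem_sup_left
          (Submodule.mem_span_singleton.mpr ⟨-(B d2 p), by module⟩))
    · refine ⟨Submodule.span ℝ {B v p • d1 - B d1 p • v}
        ⊔ Submodule.span ℝ {B v p • d2 - B d2 p • v}
        ⊔ Submodule.span ℝ {B v' p • d1 - B d1 p • v'}, finrank_sup3_le _ _ _, ?_, ?_, ?_, ?_⟩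
      · exact hps1.trans ((le_sup_left).trans le_sup_left)
      · exact hps3.trans le_sup_right
      · refine hps4.trans (span_le_of_mem ?_)
        have hx4 : B v' p • d2 - B d2 p • v'
            = (-(B d2 p * B v' p) / (B d1 p * B v p)) • (B v p • d1 - B d1 p • v)
              + (B v' p / B v p) • (B v p • d2 - B d2 p • v)
              + (B d2 p / B d1 p) • (B v' p • d1 - B d1 p • v') := by
          match_scalars <;> field_simp <;> ring
        rw [hx4]
        refine Submodule.add_mem _ (Submodule.add_mem _ ?_ ?_) ?_
        · exact Submodule.smul_mem _ _ (Submodule.mem_sup_left (Submodule.mem_sup_left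
            (Submodule.mem_span_singleton_self _)))
        · exact Submodule.smul_mem _ _ (Submodule.mem_sup_left (Submodule.mem_sup_right
            (Submodule.mem_span_singleton_self _)))
        · exact Submodule.smul_mem _ _ (Submodule.mem_sup_right
            (Submodule.mem_span_singleton_self _))
      · exact hps2.trans ((le_sup_right).trans le_sup_left)
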